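/- arXiv:2306.07707 — 4 statements merged into one kernel-verified Lean document; each statement's English description precedes it below -/
import Mathlib

section
/- For any DAG G, the 1-influential set can be ordered as i_1 ≻ i_2 ≻ … ≻ i_m where i_1 is the agent with the highest rank (largest progeny, ties broken by larger index) and for each t < m, agent i_{t+1} belongs to the progeny of i_t (excluding i_t itself). -/
attribute [local instance] Classical.propDecidable

/-- The progeny of node `i`: all nodes with a directed path to `i`, including `i`. -/
noncomputable def progeny {n : ℕ} (E : Finset (Fin n × Fin n)) (i : Fin n) : Finset (Fin n) :=
  Finset.univ.filter (fun j => Relation.ReflTransGen (fun u v => (u, v) ∈ E) j i)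

/-- The graph is acyclic. -/
def Acyclic {n : ℕ} (E : Finset (Fin n × Fin n)) : Prop :=
  ∀ i : Fin n, ¬ Relation.TransGen (fun u v => (u, v) ∈ E) i i

/-- `Prec E i j` means `i ≻ j` : larger progeny, ties broken by larger index. -/
def Prec {n : ℕ} (E : Finset (Fin n × Fin n)) (i j : Fin n) : Prop :=
  (progeny E j).card < (progeny E i).card ∨
    ((progeny E j).card = (progeny E i).card ∧ j < i)

/-- Delete all out-edges of node `i`. -/
noncomputable def delOut {n : ℕ} (E : Finset (Fin n × Fin n)) (i : Fin n) :
    Finset (Fin n × Fin n) := E.filter (fun e => e.1 ≠ i)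

/-- `i` is in the `k`-influential set: fewer than `k` nodes outrank `i`
after `i` deletes all her out-edges. -/
noncomputable def Influential {n : ℕ} (k : ℕ) (E : Finset (Fin n × Fin n)) (i : Fin n) : Prop :=
  (Finset.univ.filter (fun j => Prec (delOut E i) j i)).card < k

/-! ### Auxiliary machinery -/

/-- Weight of a node: lexicographic combination of progeny size and index. -/
noncomputable def wgt {n : ℕ} (E : Finset (Fin n × Fin n)) (i : Fin n) : ℕ :=
  (progeny E i).card * n + i.val

lemma lexnat {n a b x y : ℕ} (hx : x < n) (hy : y < n) :
    a * n + x < b * n + y ↔ a < b ∨ (a = b ∧ x < y) := by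
  have key : ∀ a b x y : ℕ, x < n → a < b → a * n + x < b * n + y := by
    intro a b x y hx hab
    have h2 : (a + 1) * n ≤ b * n := Nat.mul_le_mul_right n hab
    have h3 : (a + 1) * n = a * n + n := by ring
    omega
  constructor
  · intro h
    rcases lt_trichotomy a b with h' | h' | h'
    · exact Or.inl h'
    · subst h'; omega
    · exact absurd (key b a y x hy h') (by omega)
  · rintro (h | ⟨rfl, h⟩)
    · exact key a b x y hx h
    · omega

lemma prec_iff_wgt {n : ℕ} (E : Finset (Fin n × Fin n)) (i j : Fin n) :
    Prec E i j ↔ wgt E j < wgt E i := by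
  unfold Prec wgt
  rw [lexnat j.isLt i.isLt, Fin.lt_def]

lemma prec_total {n : ℕ} (E : Finset (Fin n × Fin n)) {i j : Fin n} (h : i ≠ j) :
    Prec E i j ∨ Prec E j i := by
  have hv : i.val ≠ j.val := fun hv => h (Fin.ext hv)
  rw [prec_iff_wgt, prec_iff_wgt]
  unfold wgt
  rcases lt_trichotomy ((progeny E i).card) ((progeny E j).card) with h' | h' | h'
  · right; rw [lexnat i.isLt j.isLt]; exact Or.inl h'
  · rcases lt_trichotomy i.val j.val with hv' | hv' | hv'
    · right; rw [lexnat i.isLt j.isLt]; exact Or.inr ⟨h', hv'⟩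
    · exact absurd hv' hv
    · left; rw [lexnat j.isLt i.isLt]; exact Or.inr ⟨h'.symm, hv'⟩
  · left; rw [lexnat j.isLt i.isLt]; exact Or.inl h'

lemma prec_irrefl {n : ℕ} (E : Finset (Fin n × Fin n)) (i : Fin n) : ¬ Prec E i i := by
  rw [prec_iff_wgt]; omega

lemma wgt_inj {n : ℕ} (E : Finset (Fin n × Fin n)) : Function.Injective (wgt E) := by
  intro i j h
  by_contra hne
  rcases prec_total E hne with hp | hp <;> rw [prec_iff_wgt] at hp <;> omega

/-- Paths in the edge-deleted graph are paths in the original graph. -/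
lemma path_of_del {n : ℕ} {E : Finset (Fin n × Fin n)} {i j k : Fin n}
    (h : Relation.ReflTransGen (fun u v => (u, v) ∈ delOut E i) j k) :
    Relation.ReflTransGen (fun u v => (u, v) ∈ E) j k := by
  refine Relation.ReflTransGen.mono ?_ _ _ h
  intro u v huv
  exact (Finset.mem_filter.1 huv).1

/-- In an acyclic graph, deleting the out-edges of `i` does not affect paths into `i`. -/
lemma del_path {n : ℕ} {E : Finset (Fin n × Fin n)} (hE : Acyclic E) {i j : Fin n}
    (h : Relation.ReflTransGen (fun u v => (u, v) ∈ E) j i) :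
    Relation.ReflTransGen (fun u v => (u, v) ∈ delOut E i) j i := by
  induction h using Relation.ReflTransGen.head_induction_on with
  | refl => exact Relation.ReflTransGen.refl
  | @head a c hac hci ih =>
    by_cases ha : a = i
    · subst ha
      exact absurd (Relation.TransGen.head' hac hci) (hE a)
    · exact Relation.ReflTransGen.head (Finset.mem_filter.2 ⟨hac, ha⟩) ih

/-- Any path into `i` either survives deletion of out-edges of `j`, or `j` has a path to `i`. -/
lemma del_or {n : ℕ} {E : Finset (Fin n × Fin n)} {i j k : Fin n}
    (h : Relation.ReflTransGen (fun u v => (u, v) ∈ E) k i) :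
    Relation.ReflTransGen (fun u v => (u, v) ∈ delOut E j) k i ∨
      Relation.ReflTransGen (fun u v => (u, v) ∈ E) j i := by
  induction h using Relation.ReflTransGen.head_induction_on with
  | refl => exact Or.inl Relation.ReflTransGen.refl
  | @head a c hac hci ih =>
    rcases ih with ih | ih
    · by_cases ha : a = j
      · subst ha
        exact Or.inr (Relation.ReflTransGen.head hac hci)
      · exact Or.inl (Relation.ReflTransGen.head (Finset.mem_filter.2 ⟨hac, ha⟩) ih)
    · exact Or.inr ih

lemma progeny_delOut_self {n : ℕ} {E : Finset (Fin n × Fin n)} (hE : Acyclic E) (i : Fin n) :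
    progeny (delOut E i) i = progeny E i := by
  ext j
  simp only [progeny, Finset.mem_filter, Finset.mem_univ, true_and]
  exact ⟨path_of_del, del_path hE⟩

lemma progeny_delOut_subset {n : ℕ} (E : Finset (Fin n × Fin n)) (i j : Fin n) :
    progeny (delOut E i) j ⊆ progeny E j := by
  intro k hk
  simp only [progeny, Finset.mem_filter, Finset.mem_univ, true_and] at hk ⊢
  exact path_of_del hk

lemma influential_iff {n : ℕ} (E : Finset (Fin n × Fin n)) (i : Fin n) :
    Influential 1 E i ↔ ∀ j : Fin n, ¬ Prec (delOut E i) j i := by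
  unfold Influential
  rw [Nat.lt_one_iff, Finset.card_eq_zero, Finset.filter_eq_empty_iff]
  simp

/-- A node with maximal weight is 1-influential. -/
lemma top_influential {n : ℕ} {E : Finset (Fin n × Fin n)} (hE : Acyclic E) {g : Fin n}
    (hg : ∀ j : Fin n, wgt E j ≤ wgt E g) : Influential 1 E g := by
  rw [influential_iff]
  intro j hp
  have h1 : (progeny (delOut E g) g).card = (progeny E g).card := by
    rw [progeny_delOut_self hE]
  have h2 : (progeny (delOut E g) j).card ≤ (progeny E j).card :=
    Finset.card_le_card (progeny_delOut_subset E g j)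
  have hjg : Prec E j g := by
    simp only [Prec, Fin.lt_def] at hp ⊢
    omega
  rw [prec_iff_wgt] at hjg
  have := hg j
  omega

/-- Chain lemma: if `j` is 1-influential and `i ≻ j`, then `j` is in the progeny of `i`. -/
lemma chain_lemma {n : ℕ} {E : Finset (Fin n × Fin n)} (hE : Acyclic E) {i j : Fin n}
    (hj : Influential 1 E j) (hij : Prec E i j) :
    Relation.ReflTransGen (fun u v => (u, v) ∈ E) j i := by
  rw [influential_iff] at hj
  have hne : i ≠ j := by rintro rfl; exact prec_irrefl E i hij
  have hji : Prec (delOut E j) j i := by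
    rcases prec_total (delOut E j) hne with h | h
    · exact absurd h (hj i)
    · exact h
  have h1 : (progeny (delOut E j) j).card = (progeny E j).card := by
    rw [progeny_delOut_self hE]
  have h2 : (progeny (delOut E j) i).card ≤ (progeny E i).card :=
    Finset.card_le_card (progeny_delOut_subset E j i)
  -- show the deletion strictly shrinks the progeny of i
  have hlt : (progeny (delOut E j) i).card < (progeny E i).card := by
    have hij' := hij
    have hji' := hji
    simp only [Prec, Fin.lt_def] at hij' hji'
    omega
  have hss : progeny (delOut E j) i ⊂ progeny E i :=
    lt_of_le_of_ne (progeny_delOut_subset E j i) (fun h => by rw [h] at hlt; omega)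
  obtain ⟨k, hk1, hk2⟩ := Finset.exists_of_ssubset hss
  simp only [progeny, Finset.mem_filter, Finset.mem_univ, true_and] at hk1 hk2
  rcases del_or (j := j) hk1 with h | h
  · exact absurd h hk2
  · exact h

/-- Descending-weight relation used to sort the influential set. -/
def wr {n : ℕ} (E : Finset (Fin n × Fin n)) (a b : Fin n) : Prop := wgt E b ≤ wgt E a

instance {n : ℕ} (E : Finset (Fin n × Fin n)) : IsTrans (Fin n) (wr E) :=
  ⟨fun _ _ _ h1 h2 => le_trans h2 h1⟩

instance {n : ℕ} (E : Finset (Fin n × Fin n)) : IsAntisymm (Fin n) (wr E) :=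
  ⟨fun _ _ h1 h2 => wgt_inj E (le_antisymm h2 h1)⟩

instance {n : ℕ} (E : Finset (Fin n × Fin n)) : IsTotal (Fin n) (wr E) :=
  ⟨fun a b => le_total (wgt E b) (wgt E a)⟩

noncomputable instance {n : ℕ} (E : Finset (Fin n × Fin n)) : DecidableRel (wr E) :=
  fun a b => Nat.decLe _ _

/-- the 1-influential set can be ordered i₁ ≻ i₂ ≻ … ≻ i_m with i₁ the
top-ranked agent of the whole graph and i_{t+1} ∈ P(i_t) \ {i_t} for all t < m. -/
theorem stmt0 {n : ℕ} (hn : 1 ≤ n) (E : Finset (Fin n × Fin n)) (hE : Acyclic E) :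
    ∃ m : ℕ, ∃ _ : 1 ≤ m, ∃ f : Fin m → Fin n,
      (∀ i : Fin n, Influential 1 E i ↔ ∃ t : Fin m, f t = i) ∧
      (∀ t s : Fin m, t < s → Prec E (f t) (f s)) ∧
      (∀ j : Fin n, j ≠ f ⟨0, by omega⟩ → Prec E (f ⟨0, by omega⟩) j) ∧
      (∀ t : Fin m, ∀ h : (t : ℕ) + 1 < m,
        f ⟨(t : ℕ) + 1, h⟩ ∈ progeny E (f t) ∧ f ⟨(t : ℕ) + 1, h⟩ ≠ f t) := by
  classical
  -- pick the globally top-ranked node g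
  have huniv : (Finset.univ : Finset (Fin n)).Nonempty := ⟨⟨0, hn⟩, Finset.mem_univ _⟩
  obtain ⟨g, -, hg⟩ := Finset.exists_max_image Finset.univ (wgt E) huniv
  have hgmax : ∀ j : Fin n, wgt E j ≤ wgt E g := fun j => hg j (Finset.mem_univ j)
  have hginf : Influential 1 E g := top_influential hE hgmax
  set S : Finset (Fin n) := Finset.univ.filter (fun i => Influential 1 E i) with hSdef
  set l : List (Fin n) := S.sort (wr E) with hldef
  have hmem : ∀ i : Fin n, i ∈ l ↔ Influential 1 E i := by
    intro i
    rw [hldef, Finset.mem_sort, hSdef, Finset.mem_filter]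
    simp
  have hsorted : List.Pairwise (wr E) l := Finset.pairwise_sort _ _
  have hnodup : l.Nodup := Finset.sort_nodup _ _
  have hprec : ∀ t s : Fin l.length, t < s → Prec E (l.get t) (l.get s) := by
    intro t s hts
    have hr : wr E (l.get t) (l.get s) := List.pairwise_iff_get.1 hsorted t s hts
    have hne : l.get t ≠ l.get s := by
      intro h
      exact absurd ((List.Nodup.get_inj_iff hnodup).1 h) (ne_of_lt hts)
    have hwne : wgt E (l.get s) ≠ wgt E (l.get t) := fun h => hne (wgt_inj E h.symm)
    rw [prec_iff_wgt]
    exact lt_of_le_of_ne hr hwne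
  have hgl : g ∈ l := (hmem g).2 hginf
  have hm : 1 ≤ l.length := List.length_pos_iff.2 (List.ne_nil_of_mem hgl)
  refine ⟨l.length, hm, l.get, ?_, hprec, ?_, ?_⟩
  · intro i
    rw [← hmem, List.mem_iff_get]
  · -- the first element is the global top
    have hf0 : l.get ⟨0, hm⟩ = g := by
      obtain ⟨t, ht⟩ := List.mem_iff_get.1 hgl
      by_cases h0 : (t : ℕ) = 0
      · have ht0 : (⟨0, hm⟩ : Fin l.length) = t := Fin.ext h0.symm
        rw [ht0, ht]
      · exfalso
        have hlt : (⟨0, hm⟩ : Fin l.length) < t := by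
          rw [Fin.lt_def]
          exact Nat.pos_of_ne_zero h0
        have := hprec ⟨0, hm⟩ t hlt
        rw [ht, prec_iff_wgt] at this
        exact absurd (hgmax (l.get ⟨0, hm⟩)) (by omega)
    intro j hj
    rw [hf0] at hj ⊢
    rw [prec_iff_wgt]
    exact lt_of_le_of_ne (hgmax j) (fun h => hj (wgt_inj E h))
  · intro t h
    have hlt : t < (⟨(t : ℕ) + 1, h⟩ : Fin l.length) := by rw [Fin.lt_def]; simp
    have hp : Prec E (l.get t) (l.get ⟨(t : ℕ) + 1, h⟩) := hprec _ _ hlt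
    have hinf : Influential 1 E (l.get ⟨(t : ℕ) + 1, h⟩) :=
      (hmem _).1 (l.get_mem _)
    refine ⟨?_, ?_⟩
    · simp only [progeny, Finset.mem_filter, Finset.mem_univ, true_and]
      exact chain_lemma hE hinf hp
    · intro heq
      rw [heq] at hp
      exact prec_irrefl E _ hp
end

section
/- For real numbers p_1 ≥ p_2 ≥ … ≥ p_m > 0 with 2·p_t ≥ p_1 for all t ≥ 2, and any β with 1/2 ≤ β ≤ 1, the quantity (1/p_1)·[β·p_m + (1−β)·Σ_{t=1}^{m−1} p_t·log₂(p_t/p_{t+1})] is at least min{(1/2)(β + (1−β)/ln 2), β}. -/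
/-- lower bound on the expected normalized progeny of the β-logarithmic
mechanism (p indexed from 0; the paper's p_t is `p (t-1)`). -/
theorem stmt4 (m : ℕ) (hm : 1 ≤ m) (p : ℕ → ℝ)
    (hpos : ∀ t, t < m → 0 < p t)
    (hmono : ∀ t, t + 1 < m → p (t + 1) ≤ p t)
    (h2 : ∀ t, 1 ≤ t → t < m → p 0 ≤ 2 * p t)
    (β : ℝ) (hβ : 1 / 2 ≤ β) (hβ1 : β ≤ 1) :
    min ((1 / 2) * (β + (1 - β) / Real.log 2)) β ≤
      (1 / p 0) * (β * p (m - 1) +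
        (1 - β) * ∑ t ∈ Finset.range (m - 1), p t * Real.logb 2 (p t / p (t + 1))) := by
  obtain ⟨n, rfl⟩ : ∃ n, m = n + 1 := ⟨m - 1, by omega⟩
  simp only [Nat.add_sub_cancel]
  have hL : (0:ℝ) < Real.log 2 := Real.log_pos one_lt_two
  have hp0 : 0 < p 0 := hpos 0 (by omega)
  have hpn : 0 < p n := hpos n (by omega)
  have hpt : ∀ t, t ≤ n → 0 < p t := fun t ht => hpos t (by omega)
  -- monotone: p n ≤ p 0
  have hmono' : ∀ t, t ≤ n → p t ≤ p 0 := by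
    intro t ht
    induction t with
    | zero => exact le_rfl
    | succ k ih => exact le_trans (hmono k (by omega)) (ih (by omega))
  -- p 0 ≤ 2 * p n
  have hx : p 0 ≤ 2 * p n := by
    rcases Nat.eq_zero_or_pos n with h | h
    · subst h; linarith
    · exact h2 n h (by omega)
  -- pointwise term bound
  have hterm : ∀ t ∈ Finset.range n, (p t - p (t+1)) / Real.log 2 ≤
      p t * Real.logb 2 (p t / p (t + 1)) := by
    intro t ht
    rw [Finset.mem_range] at ht
    have h1 : 0 < p t := hpt t (by omega)
    have h2' : 0 < p (t+1) := hpt (t+1) (by omega)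
    have hlog : Real.log (p (t+1) / p t) ≤ p (t+1) / p t - 1 :=
      Real.log_le_sub_one_of_pos (by positivity)
    rw [Real.log_div h2'.ne' h1.ne'] at hlog
    rw [Real.logb, Real.log_div h1.ne' h2'.ne']
    rw [div_le_iff₀ hL]
    have key : p t - p (t+1) ≤ p t * (Real.log (p t) - Real.log (p (t+1))) := by
      have h5 := mul_le_mul_of_nonneg_left hlog h1.le
      have heq : p t * (p (t+1) / p t - 1) = p (t+1) - p t := by field_simp
      nlinarith
    calc p t - p (t+1) ≤ p t * (Real.log (p t) - Real.log (p (t+1))) := key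
      _ = p t * ((Real.log (p t) - Real.log (p (t+1))) / Real.log 2) * Real.log 2 := by
          field_simp
  -- sum bound
  have hsum : (p 0 - p n) / Real.log 2 ≤
      ∑ t ∈ Finset.range n, p t * Real.logb 2 (p t / p (t + 1)) := by
    calc (p 0 - p n) / Real.log 2
        = ∑ t ∈ Finset.range n, (p t - p (t+1)) / Real.log 2 := by
          rw [← Finset.sum_div, Finset.sum_range_sub' p]
      _ ≤ _ := Finset.sum_le_sum hterm
  have h1β : 0 ≤ 1 - β := by linarith
  have step : (1 / p 0) * (β * p n + (1 - β) * ((p 0 - p n) / Real.log 2)) ≤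
      (1 / p 0) * (β * p n + (1 - β) * ∑ t ∈ Finset.range n, p t * Real.logb 2 (p t / p (t + 1))) := by
    apply mul_le_mul_of_nonneg_left _ (by positivity)
    have := mul_le_mul_of_nonneg_left hsum h1β
    linarith
  refine le_trans ?_ step
  have hpn0 : p n ≤ p 0 := hmono' n le_rfl
  have hrw : 1 / p 0 * (β * p n + (1 - β) * ((p 0 - p n) / Real.log 2)) =
      (β * p n + (1 - β) * ((p 0 - p n) / Real.log 2)) / p 0 := by ring
  rw [hrw, le_div_iff₀ hp0]
  rcases le_total β ((1 - β) / Real.log 2) with hc | hc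
  · refine le_trans (mul_le_mul_of_nonneg_right (min_le_right _ _) hp0.le) ?_
    have h3 : β * (p 0 - p n) ≤ (1 - β) / Real.log 2 * (p 0 - p n) :=
      mul_le_mul_of_nonneg_right hc (by linarith)
    have h4 : (1 - β) * ((p 0 - p n) / Real.log 2) = (1 - β) / Real.log 2 * (p 0 - p n) := by
      ring
    nlinarith
  · refine le_trans (mul_le_mul_of_nonneg_right (min_le_left _ _) hp0.le) ?_
    have h3 : (1 - β) / Real.log 2 * (p n - p 0 / 2) ≤ β * (p n - p 0 / 2) :=
      mul_le_mul_of_nonneg_right hc (by linarith)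
    have h4 : (1 - β) * ((p 0 - p n) / Real.log 2) = (1 - β) / Real.log 2 * (p 0 - p n) := by
      ring
    nlinarith [hL]
end

section
/- For any DAG G, the last agent i_m of the 2-influential set (the one with lowest rank in the set) satisfies 2·|P(i_m)| ≥ |P(i₂*)|, where i₂* is the node of rank 2 in G. -/
attribute [local instance] Classical.propDecidable

lemma avoid {n : ℕ} (E : Finset (Fin n × Fin n)) (i j u : Fin n)
    (h : Relation.ReflTransGen (fun a b => (a, b) ∈ E) u j)
    (hni : ¬ Relation.ReflTransGen (fun a b => (a, b) ∈ E) u i) :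
    Relation.ReflTransGen (fun a b => (a, b) ∈ delOut E i) u j := by
  induction h using Relation.ReflTransGen.head_induction_on with
  | refl => exact Relation.ReflTransGen.refl
  | head hab hbc ih =>
    rename_i a b
    have hbni : ¬ Relation.ReflTransGen (fun x y => (x, y) ∈ E) b i := fun hb =>
      hni (Relation.ReflTransGen.head hab hb)
    have hane : a ≠ i := fun h => hni (h ▸ Relation.ReflTransGen.refl)
    exact Relation.ReflTransGen.head (Finset.mem_filter.mpr ⟨hab, hane⟩) (ih hbni)

lemma sdiff_sub {n : ℕ} (E : Finset (Fin n × Fin n)) (i j : Fin n) :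
    progeny E j \ progeny E i ⊆ progeny (delOut E i) j := by
  intro u hu
  rw [Finset.mem_sdiff] at hu
  obtain ⟨huj, hui⟩ := hu
  simp only [progeny, Finset.mem_filter, Finset.mem_univ, true_and] at huj hui ⊢
  exact avoid E i j u huj hui

/-- the lowest-ranked agent i_m of the 2-influential set satisfies
2·|P(i_m)| ≥ |P(i₂*)|. -/
theorem stmt12 {n : ℕ} (hn : 2 ≤ n) (E : Finset (Fin n × Fin n)) (hE : Acyclic E)
    (i1 i2 : Fin n) (h12 : i1 ≠ i2)
    (hi1 : ∀ j : Fin n, j ≠ i1 → Prec E i1 j)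
    (hi2 : ∀ j : Fin n, j ≠ i1 → j ≠ i2 → Prec E i2 j)
    (im : Fin n) (him : Influential 2 E im)
    (hlast : ∀ j : Fin n, Influential 2 E j → j ≠ im → Prec E j im) :
    (progeny E i2).card ≤ 2 * (progeny E im).card := by
  by_contra hcon
  push_neg at hcon
  have h21 : (progeny E i2).card ≤ (progeny E i1).card := by
    rcases hi1 i2 (Ne.symm h12) with h | ⟨h, _⟩ <;> omega
  have him2 : im ≠ i2 := by rintro rfl; omega
  have him1 : im ≠ i1 := by rintro rfl; omega
  have key : ∀ j : Fin n, (progeny E j).card ≤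
      (progeny (delOut E im) j).card + (progeny E im).card := by
    intro j
    calc (progeny E j).card ≤ (progeny E j \ progeny E im).card + (progeny E im).card :=
          Finset.card_le_card_sdiff_add_card
      _ ≤ _ := Nat.add_le_add_right (Finset.card_le_card (sdiff_sub E im j)) _
  have hmle : (progeny (delOut E im) im).card ≤ (progeny E im).card :=
    Finset.card_le_card (progeny_delOut_subset E im im)
  have hp1 : Prec (delOut E im) i1 im := by
    left
    have := key i1
    omega
  have hp2 : Prec (delOut E im) i2 im := by
    left
    have := key i2
    omega
  have hsub : ({i1, i2} : Finset (Fin n)) ⊆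
      Finset.univ.filter (fun j => Prec (delOut E im) j im) := by
    intro x hx
    simp only [Finset.mem_insert, Finset.mem_singleton] at hx
    rcases hx with rfl | rfl <;> simp [Finset.mem_filter, hp1, hp2]
  have hcard : 2 ≤ (Finset.univ.filter (fun j => Prec (delOut E im) j im)).card := by
    have := Finset.card_le_card hsub
    rwa [Finset.card_pair h12] at this
  exact absurd him (by simp [Influential]; omega)
end

section
/- For positive reals P₁ ≥ P₂ > 0 (interpreted as top two progenies) with ratio ρ = P₂/P₁ ∈ (0,1], the quantity (ρ/2 + 1/(1+ln 2)) / (1 + ρ) is at least (3 + ln 2)/(4(1 + ln 2)). -/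
/-- for ρ ∈ (0,1], (ρ/2 + 1/(1+ln 2))/(1+ρ) ≥ (3+ln 2)/(4(1+ln 2)). -/
theorem stmt15 (ρ : ℝ) (h0 : 0 < ρ) (h1 : ρ ≤ 1) :
    (3 + Real.log 2) / (4 * (1 + Real.log 2)) ≤
      (ρ / 2 + 1 / (1 + Real.log 2)) / (1 + ρ) := by
  have hL0 : 0 < Real.log 2 := Real.log_pos (by norm_num)
  have hL1 : Real.log 2 < 1 := by
    have := Real.log_lt_sub_one_of_pos (x := 2) (by norm_num) (by norm_num)
    linarith
  set L := Real.log 2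
  have h1L : (0:ℝ) < 1 + L := by linarith
  rw [div_le_div_iff₀ (by linarith) (by linarith)]
  have : ρ / 2 + 1 / (1 + L) = (ρ * (1 + L) + 2) / (2 * (1 + L)) := by
    field_simp
  rw [this]
  rw [div_mul_eq_mul_div, le_div_iff₀ (by linarith)]
  nlinarith [mul_pos h0 hL0, sq_nonneg (1 - ρ), mul_nonneg (sub_nonneg.2 h1) hL0.le, mul_nonneg (mul_nonneg (sub_nonneg.2 h1) hL0.le) hL0.le]
end
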